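/- arXiv:1812.07257 — 2 statements merged into one kernel-verified Lean document; each statement's English description precedes it below -/
import Mathlib

section
/- Let H be a Hilbert space and T : K(H) → K(H) a bounded linear operator on the algebra of compact operators satisfying T(ST') = T(S)T' for all compact S, T'. Then there exists a bounded operator a ∈ B(H) such that T(S) = aS for all compact S; i.e., the multiplier algebra of K(H) is B(H). -/
open ContinuousLinearMap in
/-- Every multiplier of the algebra `K(H)` of compact operators on a Hilbert space `H`
is left multiplication (composition) by a bounded operator `a ∈ B(H)`: the multiplier
algebra of `K(H)` is `B(H)`. -/
theorem multiplier_algebra_of_compact_operators {H : Type} [NormedAddCommGroup H]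
    [InnerProductSpace ℂ H] [CompleteSpace H]
    (K : Submodule ℂ (H →L[ℂ] H))
    (hK : K = compactOperator (σ₁₄ := RingHom.id ℂ) (M₁ := H) (M₄ := H))
    (hKmul : ∀ x y : H →L[ℂ] H, x ∈ K → y ∈ K → x * y ∈ K)
    (T : K →L[ℂ] K)
    (hT : ∀ S S' : K,
      (T ⟨(S : H →L[ℂ] H) * (S' : H →L[ℂ] H), hKmul S S' S.2 S'.2⟩ : H →L[ℂ] H) =
        (T S : H →L[ℂ] H) * (S' : H →L[ℂ] H)) :
    ∃ a : H →L[ℂ] H, ∀ S : K, (T S : H →L[ℂ] H) = a * (S : H →L[ℂ] H) := by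
  by_cases hH : Subsingleton H
  · exact ⟨0, fun S => by ext x; exact Subsingleton.elim _ _⟩
  have : Nontrivial H := not_subsingleton_iff_nontrivial.mp hH
  obtain ⟨w, hw⟩ : ∃ w : H, ‖w‖ = 1 := exists_norm_eq H zero_le_one
  -- the rank-one operator `x ↦ ⟪u, x⟫ • v`
  set θ : H → H → (H →L[ℂ] H) := fun v u => (innerSL ℂ u).smulRight v with hθ
  have hθ_apply : ∀ v u x, θ v u x = (inner ℂ u x : ℂ) • v := fun v u x => rfl
  -- rank-one operators are compact
  have hθK : ∀ v u, θ v u ∈ K := by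
    intro v u
    rw [hK]
    show IsCompactOperator (θ v u)
    have h1 : IsCompactOperator (toSpanSingleton ℂ v) := by
      refine ⟨(fun c : ℂ => c • v) '' Metric.closedBall 0 1,
        ((isCompact_closedBall 0 1).image (by fun_prop)), ?_⟩
      exact Filter.mem_of_superset (Metric.closedBall_mem_nhds 0 one_pos)
        (fun c hc => ⟨c, hc, rfl⟩)
    have : (θ v u : H → H) = (toSpanSingleton ℂ v) ∘ (innerSL ℂ u) := by
      funext x; simp [hθ_apply, toSpanSingleton_apply]
    rw [show IsCompactOperator (θ v u) ↔ IsCompactOperator ((θ v u : H →L[ℂ] H) : H → H)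
      from Iff.rfl, this]
    exact h1.comp_clm _
  have hww : (inner ℂ w w : ℂ) = 1 := by
    rw [inner_self_eq_norm_sq_to_K, hw]; norm_num
  -- linearity of θ in the first variable, as elements of K
  have hθadd : ∀ v v' u, θ (v + v') u = θ v u + θ v' u := by
    intro v v' u; ext x; simp [hθ_apply, smul_add]
  have hθsmul : ∀ (c : ℂ) v u, θ (c • v) u = c • θ v u := by
    intro c v u; ext x
    simp only [hθ_apply, ContinuousLinearMap.smul_apply]
    rw [smul_comm]
  -- the candidate operator as a linear map
  set L : H →ₗ[ℂ] H :=
    { toFun := fun v => (T ⟨θ v w, hθK v w⟩ : H →L[ℂ] H) w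
      map_add' := by
        intro v v'
        have : (⟨θ (v + v') w, hθK _ w⟩ : K) = ⟨θ v w, hθK v w⟩ + ⟨θ v' w, hθK v' w⟩ := by
          ext1; simp [hθadd]
        simp only [this, map_add]; rfl
      map_smul' := by
        intro c v
        have : (⟨θ (c • v) w, hθK _ w⟩ : K) = c • ⟨θ v w, hθK v w⟩ := by
          ext1; simp [hθsmul]
        simp only [this, map_smul]; rfl } with hL
  have hLbound : ∀ v, ‖L v‖ ≤ ‖T‖ * ‖v‖ := by
    intro v
    calc ‖(T ⟨θ v w, hθK v w⟩ : H →L[ℂ] H) w‖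
        ≤ ‖(T ⟨θ v w, hθK v w⟩ : H →L[ℂ] H)‖ * ‖w‖ := le_opNorm _ _
      _ ≤ (‖T‖ * ‖(⟨θ v w, hθK v w⟩ : K)‖) * ‖w‖ := by
          gcongr; exact T.le_opNorm _
      _ = ‖T‖ * ‖v‖ := by
          have : ‖(⟨θ v w, hθK v w⟩ : K)‖ = ‖θ v w‖ := rfl
          rw [hw, this, hθ, norm_smulRight_apply, innerSL_apply_norm, hw]
          ring
  refine ⟨L.mkContinuous ‖T‖ hLbound, fun S => ?_⟩
  ext x
  have key : (⟨(S : H →L[ℂ] H) * θ x w, hKmul S (θ x w) S.2 (hθK x w)⟩ : K)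
      = ⟨θ ((S : H →L[ℂ] H) x) w, hθK _ w⟩ := by
    ext1
    show (S : H →L[ℂ] H) * θ x w = θ ((S : H →L[ℂ] H) x) w
    ext y; simp [hθ_apply, mul_apply]
  have h1 := hT S ⟨θ x w, hθK x w⟩
  have h2 : θ x w w = x := by rw [hθ_apply, hww, one_smul]
  calc (T S : H →L[ℂ] H) x
      = (T S : H →L[ℂ] H) (θ x w w) := by rw [h2]
    _ = ((T S : H →L[ℂ] H) * θ x w) w := rfl
    _ = (T ⟨(S : H →L[ℂ] H) * θ x w, hKmul S (θ x w) S.2 (hθK x w)⟩ : H →L[ℂ] H) w := by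
        rw [h1]
    _ = (T ⟨θ ((S : H →L[ℂ] H) x) w, hθK _ w⟩ : H →L[ℂ] H) w := by rw [key]
    _ = L ((S : H →L[ℂ] H) x) := rfl
    _ = (L.mkContinuous ‖T‖ hLbound * (S : H →L[ℂ] H)) x := rfl
end

section
/- Let X be a locally compact Hausdorff space. Then every multiplier of C₀(X) is given by multiplication by a bounded continuous function: for each bounded linear T : C₀(X) → C₀(X) with T(fg) = T(f)g there exists a unique g ∈ C_b(X) with T(f) = gf for all f ∈ C₀(X), and ‖T‖ = ‖g‖_∞. -/
open ZeroAtInfty BoundedContinuousFunction Set Filter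

/-- A bump function in `C₀(X, ℂ)` with values of norm at most `1`, equal to `1` near `x`. -/
lemma exists_bump_C0 {X : Type} [TopologicalSpace X] [LocallyCompactSpace X] [T2Space X]
    (x : X) :
    ∃ f : C₀(X, ℂ), (∀ y, ‖f y‖ ≤ 1) ∧ ∀ᶠ y in nhds x, f y = 1 := by
  obtain ⟨K, hK, hKx⟩ := exists_compact_mem_nhds x
  obtain ⟨f, hf1, -, hfc, hf01⟩ :=
    exists_continuous_one_zero_of_isCompact hK isClosed_empty (disjoint_empty K)
  have hcs : HasCompactSupport (fun y => (f y : ℂ)) :=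
    hfc.comp_left (g := Complex.ofReal) Complex.ofReal_zero
  refine ⟨⟨⟨fun y => (f y : ℂ), Complex.continuous_ofReal.comp f.continuous⟩,
      hcs.is_zero_at_infty⟩, fun y => ?_, ?_⟩
  · show ‖(f y : ℂ)‖ ≤ 1
    rw [Complex.norm_real, Real.norm_eq_abs, abs_le]
    exact ⟨le_trans (by norm_num) (hf01 y).1, (hf01 y).2⟩
  · filter_upwards [hKx] with y hy
    show ((f y : ℂ)) = 1
    simp [hf1 hy]

/-- Pointwise norm bound for `C₀` functions. -/
lemma C0_norm_apply_le {X : Type} [TopologicalSpace X] (f : C₀(X, ℂ)) (x : X) :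
    ‖f x‖ ≤ ‖f‖ := by
  rw [← ZeroAtInftyContinuousMap.norm_toBCF_eq_norm]
  exact f.toBCF.norm_coe_le_norm x

/-- Norm bound for `C₀` functions from a pointwise bound. -/
lemma C0_norm_le {X : Type} [TopologicalSpace X] (f : C₀(X, ℂ)) {C : ℝ} (hC : 0 ≤ C)
    (h : ∀ x, ‖f x‖ ≤ C) : ‖f‖ ≤ C := by
  rw [← ZeroAtInftyContinuousMap.norm_toBCF_eq_norm]
  exact (BoundedContinuousFunction.norm_le hC).2 h

/-- For a locally compact Hausdorff space `X`, every multiplier `T` of `C₀(X)` is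
multiplication by a unique `g ∈ C_b(X)`, and `‖T‖ = ‖g‖_∞`. -/
theorem multiplier_algebra_of_C0 {X : Type} [TopologicalSpace X] [LocallyCompactSpace X]
    [T2Space X] (T : C₀(X, ℂ) →L[ℂ] C₀(X, ℂ))
    (hT : ∀ f g : C₀(X, ℂ), T (f * g) = T f * g) :
    ∃! g : X →ᵇ ℂ, (∀ (f : C₀(X, ℂ)) (x : X), T f x = g x * f x) ∧ ‖T‖ = ‖g‖ := by
  -- choose bumps
  choose bump hbump_le hbump_one using exists_bump_C0 (X := X)
  -- well-definedness : if f x = 1 = h x then T f x = T h x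
  have key : ∀ (f h : C₀(X, ℂ)) (x : X), f x = 1 → h x = 1 → T f x = T h x := by
    intro f h x hf hh
    have h1 : T (f * h) x = T f x * h x := by rw [hT f h]; rfl
    have h2 : T (h * f) x = T h x * f x := by rw [hT h f]; rfl
    rw [mul_comm f h] at h1
    rw [h1, hf, hh, mul_one, mul_one] at h2
    exact h2
  set g : X → ℂ := fun x => T (bump x) x with hg
  have hbx : ∀ x, bump x x = 1 := fun x => (hbump_one x).self_of_nhds
  -- main identity
  have hmain : ∀ (f : C₀(X, ℂ)) (x : X), T f x = g x * f x := by
    intro f x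
    have h1 : T (f * bump x) x = T f x * bump x x := by rw [hT]; rfl
    have h2 : T (bump x * f) x = T (bump x) x * f x := by rw [hT]; rfl
    rw [mul_comm f (bump x)] at h1
    rw [h1, hbx x, mul_one] at h2
    exact h2
  -- continuity of g
  have hcont : Continuous g := by
    rw [continuous_iff_continuousAt]
    intro x
    have heq : ∀ᶠ y in nhds x, T (bump x) y = g y := by
      filter_upwards [hbump_one x] with y hy
      exact key (bump x) (bump y) y hy (hbx y)
    exact ((T (bump x)).continuous.continuousAt).congr heq
  -- boundedness of g
  have hbdd : ∀ x, ‖g x‖ ≤ ‖T‖ := by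
    intro x
    calc ‖g x‖ = ‖T (bump x) x‖ := rfl
      _ ≤ ‖T (bump x)‖ := C0_norm_apply_le _ x
      _ ≤ ‖T‖ * ‖bump x‖ := T.le_opNorm _
      _ ≤ ‖T‖ * 1 :=
          mul_le_mul_of_nonneg_left (C0_norm_le _ zero_le_one (hbump_le x)) (norm_nonneg T)
      _ = ‖T‖ := mul_one _
  set G : X →ᵇ ℂ := BoundedContinuousFunction.ofNormedAddCommGroup g hcont ‖T‖ hbdd with hG
  have hGapp : ∀ x, G x = g x := fun x => rfl
  have hGnorm_le : ‖G‖ ≤ ‖T‖ :=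
    (BoundedContinuousFunction.norm_le (norm_nonneg T)).2 hbdd
  have hTnorm_le : ‖T‖ ≤ ‖G‖ := by
    apply T.opNorm_le_bound (norm_nonneg G)
    intro f
    apply C0_norm_le _ (by positivity)
    intro x
    rw [hmain f x]
    calc ‖g x * f x‖ = ‖g x‖ * ‖f x‖ := norm_mul _ _
      _ ≤ ‖G‖ * ‖f‖ :=
          mul_le_mul (G.norm_coe_le_norm x) (C0_norm_apply_le f x) (norm_nonneg _)
            (norm_nonneg _)
  refine ⟨G, ⟨fun f x => hmain f x, le_antisymm hTnorm_le hGnorm_le⟩, ?_⟩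
  rintro G' ⟨hG', -⟩
  ext x
  have h1 := hG' (bump x) x
  have h2 := hmain (bump x) x
  rw [hbx x, mul_one] at h1 h2
  rw [← h1]
  exact h2
end
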